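/- If emb_α, proj_α form an ep-pair from α into a universal domain U, and similarly for β and γ, define coerce_{α,β} = proj_β ∘ emb_α. Then if REP α ⊑ REP β or REP γ ⊑ REP β (where REP α = emb_α ∘ proj_α), we have coerce_{β,γ} ∘ coerce_{α,β} = coerce_{α,γ}. -/

import Mathlib

open OmegaCompletePartialOrder

/-- If `REP α ⊑ REP β` or `REP γ ⊑ REP β`, then coercing from `α` to `β` and
then to `γ` is the same as coercing directly from `α` to `γ`. -/
theorem coerce_coerce {U α β γ : Type*}
    [OmegaCompletePartialOrder U] [OrderBot U]
    [OmegaCompletePartialOrder α] [OrderBot α]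
    [OmegaCompletePartialOrder β] [OrderBot β]
    [OmegaCompletePartialOrder γ] [OrderBot γ]
    (embα : α → U) (projα : U → α) (embβ : β → U) (projβ : U → β)
    (embγ : γ → U) (projγ : U → γ)
    (hembα : ωScottContinuous embα)
    (hprojα : ωScottContinuous projα)
    (hembβ : ωScottContinuous embβ)
    (hprojβ : ωScottContinuous projβ)
    (hembγ : ωScottContinuous embγ)
    (hprojγ : ωScottContinuous projγ)
    (hα₁ : ∀ x, projα (embα x) = x) (hα₂ : ∀ u, embα (projα u) ≤ u)
    (hβ₁ : ∀ x, projβ (embβ x) = x) (hβ₂ : ∀ u, embβ (projβ u) ≤ u)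
    (hγ₁ : ∀ x, projγ (embγ x) = x) (hγ₂ : ∀ u, embγ (projγ u) ≤ u)
    (hrep : (∀ u, embα (projα u) ≤ embβ (projβ u)) ∨
            (∀ u, embγ (projγ u) ≤ embβ (projβ u))) :
    ∀ x : α, projγ (embβ (projβ (embα x))) = projγ (embα x) := by
  have mγ := hprojγ.monotone
  intro x
  rcases hrep with h | h
  · have h1 : embβ (projβ (embα x)) ≤ embα x := hβ₂ _
    have h2 : embα x ≤ embβ (projβ (embα x)) := by
      have := h (embα x); rwa [hα₁] at this
    rw [le_antisymm h1 h2]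
  · apply le_antisymm
    · exact mγ (hβ₂ _)
    · have := mγ (h (embα x))
      rwa [hγ₁] at this
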